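/- arXiv:2601.10538 — 4 statements merged into one kernel-verified Lean document; each statement's English description precedes it below -/
import Mathlib

section
/- For every ISAC network, every pair (s, f) ∈ R is achieved by a valid assignment in which, for each undirected link {i,j}, at least one of the two directions carries zero rates: either f_{(i,j)} = s_{(i,j)} = 0 or f_{(j,i)} = s_{(j,i)} = 0. -/
/-- An ISAC network on a finite node type `V`: a symmetric, irreflexive set of
directed links `E`, a source `Tx`, a sink `Rx`, a nonnegative capacity `c` on
undirected links (unordered pairs), and a sensing region `A`. -/
structure ISACNetwork (V : Type) [Fintype V] [DecidableEq V] where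
  E : Finset (V × V)
  symm : ∀ i j : V, (i, j) ∈ E → (j, i) ∈ E
  irrefl : ∀ i : V, (i, i) ∉ E
  Tx : V
  Rx : V
  TxNeRx : Tx ≠ Rx
  c : Sym2 V → ℝ
  c_nonneg : ∀ u : Sym2 V, 0 ≤ c u
  A : Finset V

namespace ISACNetwork

variable {V : Type} [Fintype V] [DecidableEq V]

/-- `E(A)`: directed links with both endpoints in the sensing region. -/
def EA (N : ISACNetwork V) : Finset (V × V) :=
  N.E.filter fun e => e.1 ∈ N.A ∧ e.2 ∈ N.A

/-- `U(A)`: undirected links with both endpoints in the sensing region. -/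
def UA (N : ISACNetwork V) : Finset (Sym2 V) :=
  N.EA.image (fun e => Sym2.mk e.1 e.2)

/-- A valid assignment of communication rates `f` and sensing rates `s`:
nonnegative rates for which there is a nonnegative capacity split `ca` of the
undirected link capacities with `f e + s e ≤ ca e` on each directed link, no
communication into the source or out of the sink, and flow conservation at
every intermediate node. -/
def Valid (N : ISACNetwork V) (f s : V × V → ℝ) : Prop :=
  (∀ e ∈ N.E, 0 ≤ f e) ∧ (∀ e ∈ N.E, 0 ≤ s e) ∧
  ∃ ca : V × V → ℝ,
    (∀ e ∈ N.E, 0 ≤ ca e) ∧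
    (∀ i j : V, (i, j) ∈ N.E → ca (i, j) + ca (j, i) = N.c (Sym2.mk i j)) ∧
    (∀ e ∈ N.E, f e + s e ≤ ca e) ∧
    (∀ i : V, (i, N.Tx) ∈ N.E → f (i, N.Tx) = 0) ∧
    (∀ j : V, (N.Rx, j) ∈ N.E → f (N.Rx, j) = 0) ∧
    (∀ j : V, j ≠ N.Tx → j ≠ N.Rx →
      ∑ i ∈ Finset.univ.filter (fun i => (i, j) ∈ N.E), f (i, j)
        = ∑ k ∈ Finset.univ.filter (fun k => (j, k) ∈ N.E), f (j, k))

/-- The sensing fidelity achieved by a sensing-rate assignment. -/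
def sensOf (N : ISACNetwork V) (s : V × V → ℝ) : ℝ := ∑ e ∈ N.EA, s e

/-- The throughput achieved by a communication-rate assignment. -/
def flowOf (N : ISACNetwork V) (f : V × V → ℝ) : ℝ :=
  ∑ j ∈ Finset.univ.filter (fun j => (N.Tx, j) ∈ N.E), f (N.Tx, j)

/-- The sensing–throughput region: all pairs `(s, f)` achieved by a valid
assignment. -/
def Region (N : ISACNetwork V) : Set (ℝ × ℝ) :=
  { p | ∃ fr sr : V × V → ℝ, N.Valid fr sr ∧ N.sensOf sr = p.1 ∧ N.flowOf fr = p.2 }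

end ISACNetwork

/-- Every pair `(s, f) ∈ R` is achieved by a valid assignment in which, for
each undirected link `{i, j}`, at least one of the two directions carries zero
communication and sensing rates. -/
theorem one_direction_off {V : Type} [Fintype V] [DecidableEq V]
    (N : ISACNetwork V) (s f : ℝ) (h : (s, f) ∈ N.Region) :
    ∃ fr sr : V × V → ℝ, N.Valid fr sr ∧ N.sensOf sr = s ∧ N.flowOf fr = f ∧
      ∀ i j : V, (i, j) ∈ N.E →
        (fr (i, j) = 0 ∧ sr (i, j) = 0) ∨ (fr (j, i) = 0 ∧ sr (j, i) = 0) := by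
  classical
  obtain ⟨fr, sr, ⟨hf0, hs0, ca, hca0, hcasum, hcap, hTx, hRx, hcons⟩, hsens, hflow⟩ := h
  -- an injection into ℕ to break ties
  let κ : V → ℕ := fun v => ((Fintype.equivFin V) v : ℕ)
  have κinj : Function.Injective κ := fun a b hab =>
    (Fintype.equivFin V).injective (Fin.val_injective hab)
  -- reduced flow
  let f' : V × V → ℝ := fun e => fr e - min (fr e) (fr (e.2, e.1))
  have hf'nonneg : ∀ e, 0 ≤ f' e := fun e => sub_nonneg.2 (min_le_left _ _)
  have hzero : ∀ i j : V, f' (i, j) = 0 ∨ f' (j, i) = 0 := by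
    intro i j
    rcases le_total (fr (i, j)) (fr (j, i)) with hle | hle
    · left; simp [f', min_eq_left hle]
    · right; simp [f', min_eq_left hle]
  -- which direction to keep
  let keep : V × V → Prop := fun e => f' (e.2, e.1) = 0 ∧ (0 < f' e ∨ κ e.1 < κ e.2)
  have hnotkeep : ∀ i j : V, ¬ keep (i, j) → f' (i, j) = 0 := by
    intro i j hk
    by_contra ha
    have hpos : 0 < f' (i, j) := (hf'nonneg _).lt_of_ne (Ne.symm ha)
    have hb : f' (j, i) = 0 := (hzero i j).resolve_left ha
    exact hk ⟨hb, Or.inl hpos⟩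
  have hone : ∀ i j : V, i ≠ j → (keep (i, j) ↔ ¬ keep (j, i)) := by
    intro i j hij
    have hκne : κ i ≠ κ j := fun h => hij (κinj h)
    constructor
    · rintro ⟨hb, hrest⟩ ⟨ha, hrest'⟩
      rcases hrest with hpos | hlt
      · exact (ne_of_gt hpos) ha
      · rcases hrest' with hpos' | hlt'
        · exact (ne_of_gt hpos') hb
        · exact lt_irrefl _ (hlt.trans hlt')
    · intro hnk
      by_cases ha : f' (i, j) = 0
      · by_cases hb : f' (j, i) = 0
        · refine ⟨hb, Or.inr ?_⟩
          rcases hκne.lt_or_gt with hlt | hlt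
          · exact hlt
          · exact absurd ⟨ha, Or.inr hlt⟩ hnk
        · exact absurd ⟨ha, Or.inl ((hf'nonneg _).lt_of_ne (Ne.symm hb))⟩ hnk
      · have hb : f' (j, i) = 0 := (hzero i j).resolve_left ha
        exact ⟨hb, Or.inl ((hf'nonneg _).lt_of_ne (Ne.symm ha))⟩
  have hne : ∀ i j : V, (i, j) ∈ N.E → i ≠ j := by
    intro i j hij hEq
    subst hEq
    exact N.irrefl i hij
  have hEAsub : ∀ e ∈ N.EA, e ∈ N.E := by
    intro e he
    exact (Finset.mem_filter.1 he).1
  have hEAswap : ∀ e ∈ N.EA, (e.2, e.1) ∈ N.EA := by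
    intro e he
    rcases Finset.mem_filter.1 he with ⟨heE, hA1, hA2⟩
    exact Finset.mem_filter.2 ⟨N.symm e.1 e.2 heE, hA2, hA1⟩
  -- new sensing rates and capacity split
  let s' : V × V → ℝ := fun e => if keep e ∧ e ∈ N.EA then sr e + sr (e.2, e.1) else 0
  let ca' : V × V → ℝ := fun e => if keep e then N.c (Sym2.mk e.1 e.2) else 0
  have hs'zero : ∀ e, ¬ keep e → s' e = 0 := by
    intro e hk
    simp only [s']
    rw [if_neg (not_and_of_not_left _ hk)]
  refine ⟨f', s', ⟨fun e _ => hf'nonneg e, ?_, ca', ?_, ?_, ?_, ?_, ?_, ?_⟩, ?_, ?_, ?_⟩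
  · -- s' nonneg
    intro e heE
    simp only [s']
    split
    · next hc =>
      have h1 := hs0 e heE
      have h2 := hs0 (e.2, e.1) (N.symm e.1 e.2 heE)
      linarith
    · exact le_refl 0
  · -- ca' nonneg
    intro e _
    simp only [ca']
    split
    · exact N.c_nonneg _
    · exact le_refl 0
  · -- capacity split sums
    intro i j hij
    have hij' := hne i j hij
    by_cases hk : keep (i, j)
    · have hk' : ¬ keep (j, i) := (hone i j hij').1 hk
      simp only [ca', if_pos hk, if_neg hk', add_zero]
    · have hk' : keep (j, i) := (hone j i (Ne.symm hij')).2 (by simpa using hk)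
      simp only [ca', if_neg hk, if_pos hk', zero_add]
      exact congrArg N.c Sym2.eq_swap
  · -- f' + s' ≤ ca'
    intro e heE
    have hswapE : (e.2, e.1) ∈ N.E := N.symm e.1 e.2 heE
    by_cases hk : keep e
    · have hca'e : ca' e = N.c (Sym2.mk e.1 e.2) := if_pos hk
      have hmin : 0 ≤ min (fr e) (fr (e.2, e.1)) := le_min (hf0 e heE) (hf0 _ hswapE)
      have hf'le : f' e ≤ fr e := by simp only [f']; linarith
      have hs'le : s' e ≤ sr e + sr (e.2, e.1) := by
        simp only [s']
        split
        · exact le_refl _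
        · have h1 := hs0 e heE
          have h2 := hs0 (e.2, e.1) hswapE
          linarith
      have h1 := hcap e heE
      have h2 := hcap (e.2, e.1) hswapE
      have h3 := hcasum e.1 e.2 heE
      have h4 := hf0 (e.2, e.1) hswapE
      rw [hca'e]
      linarith
    · rw [hnotkeep e.1 e.2 hk, hs'zero e hk]
      simp only [ca', if_neg hk]
      linarith
  · -- no flow into Tx
    intro i hiE
    have h0 : fr (i, N.Tx) = 0 := hTx i hiE
    have h1 : 0 ≤ fr (N.Tx, i) := hf0 _ (N.symm i N.Tx hiE)
    simp [f', h0, min_eq_left h1]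
  · -- no flow out of Rx
    intro j hjE
    have h0 : fr (N.Rx, j) = 0 := hRx j hjE
    have h1 : 0 ≤ fr (j, N.Rx) := hf0 _ (N.symm N.Rx j hjE)
    simp [f', h0, min_eq_left h1]
  · -- conservation
    intro j hjTx hjRx
    have hset : (Finset.univ.filter (fun i => (i, j) ∈ N.E))
        = (Finset.univ.filter (fun k => (j, k) ∈ N.E)) := by
      ext x
      simp only [Finset.mem_filter, Finset.mem_univ, true_and]
      exact ⟨fun hh => N.symm x j hh, fun hh => N.symm j x hh⟩
    have hmins : ∑ i ∈ Finset.univ.filter (fun i => (i, j) ∈ N.E),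
          min (fr (i, j)) (fr (j, i))
        = ∑ k ∈ Finset.univ.filter (fun k => (j, k) ∈ N.E),
          min (fr (j, k)) (fr (k, j)) := by
      rw [← hset]
      exact Finset.sum_congr rfl (fun x _ => min_comm _ _)
    simp only [f', Finset.sum_sub_distrib]
    rw [hcons j hjTx hjRx, hmins]
  · -- sensing preserved
    have hstep : ∀ e ∈ N.EA, s' e = if keep e then sr e + sr (e.2, e.1) else 0 := by
      intro e he
      by_cases hk : keep e
      · simp only [s', if_pos (And.intro hk he), if_pos hk]
      · simp only [s', if_neg (not_and_of_not_left _ hk), if_neg hk]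
    have h1 : N.sensOf s' = ∑ e ∈ N.EA.filter keep, (sr e + sr (e.2, e.1)) := by
      rw [ISACNetwork.sensOf, Finset.sum_congr rfl hstep, Finset.sum_filter]
    have hbij : ∑ e ∈ N.EA.filter keep, sr (e.2, e.1)
        = ∑ e ∈ N.EA.filter (fun e => ¬ keep e), sr e := by
      refine Finset.sum_nbij' (i := fun e => (e.2, e.1)) (j := fun e => (e.2, e.1))
        ?_ ?_ ?_ ?_ ?_
      · intro a ha
        rcases Finset.mem_filter.1 ha with ⟨haEA, hak⟩
        refine Finset.mem_filter.2 ⟨hEAswap a haEA, ?_⟩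
        exact (hone a.1 a.2 (hne a.1 a.2 (hEAsub a haEA))).1 hak
      · intro a ha
        rcases Finset.mem_filter.1 ha with ⟨haEA, hak⟩
        refine Finset.mem_filter.2 ⟨hEAswap a haEA, ?_⟩
        exact (hone a.2 a.1 (Ne.symm (hne a.1 a.2 (hEAsub a haEA)))).2 (by simpa using hak)
      · intro a _; rfl
      · intro a _; rfl
      · intro a _; rfl
    rw [h1, Finset.sum_add_distrib, hbij, Finset.sum_filter_add_sum_filter_not]
    exact hsens
  · -- throughput preserved
    rw [ISACNetwork.flowOf]
    have hstep : ∀ j ∈ Finset.univ.filter (fun j => (N.Tx, j) ∈ N.E),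
        f' (N.Tx, j) = fr (N.Tx, j) := by
      intro j hj
      have hjE : (N.Tx, j) ∈ N.E := (Finset.mem_filter.1 hj).2
      have h0 : fr (j, N.Tx) = 0 := hTx j (N.symm N.Tx j hjE)
      simp [f', h0, min_eq_right (hf0 _ hjE)]
    rw [Finset.sum_congr rfl hstep]
    exact hflow
  · -- one direction off
    intro i j hij
    by_cases hk : keep (i, j)
    · right
      have hk' : ¬ keep (j, i) := (hone i j (hne i j hij)).1 hk
      exact ⟨hnotkeep j i hk', hs'zero (j, i) hk'⟩
    · left
      exact ⟨hnotkeep i j hk, hs'zero (i, j) hk⟩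
end

section
/- In a one-dimensional ISAC network with K nodes and nonempty sensing link set U(A), free sensing occurs if and only if some sensing link has capacity strictly above the bottleneck: there exists s > 0 with (s, f*) ∈ R if and only if there exists u ∈ U(A) with c_u > c_min, where c_min := min_{1 ≤ j ≤ K−1} c_{{j,j+1}} and f* is the maximum throughput. -/
/-- The one-dimensional ISAC network with `K ≥ 2` nodes: nodes `0, …, K-1`
(standing for `1, …, K`), links between consecutive nodes in both directions,
source node `0` and sink node `K-1`. -/
def pathNetwork (K : ℕ) (hK : 2 ≤ K) (cap : Sym2 (Fin K) → ℝ)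
    (hcap : ∀ u, 0 ≤ cap u) (A : Finset (Fin K)) : ISACNetwork (Fin K) where
  E := Finset.univ.filter fun e : Fin K × Fin K =>
    e.1.val + 1 = e.2.val ∨ e.2.val + 1 = e.1.val
  symm := by
    intro i j h
    simp only [Finset.mem_filter, Finset.mem_univ, true_and] at h ⊢
    tauto
  irrefl := by
    intro i h
    simp only [Finset.mem_filter, Finset.mem_univ, true_and] at h
    omega
  Tx := ⟨0, by omega⟩
  Rx := ⟨K - 1, by omega⟩
  TxNeRx := by
    rw [Fin.ne_iff_vne]
    simp only [ne_eq]
    omega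
  c := cap
  c_nonneg := hcap
  A := A

/-- `c_min`: the smallest undirected link capacity of the one-dimensional
ISAC network, `min_{1 ≤ j ≤ K-1} c_{{j,j+1}}`. -/
noncomputable def cmin (K : ℕ) (hK : 2 ≤ K) (cap : Sym2 (Fin K) → ℝ) : ℝ :=
  (Finset.univ : Finset (Fin (K - 1))).inf'
    (Finset.univ_nonempty_iff.mpr ⟨⟨0, by omega⟩⟩)
    (fun j => cap (Sym2.mk (⟨j.val, by have := j.isLt; omega⟩ : Fin K)
      (⟨j.val + 1, by have := j.isLt; omega⟩ : Fin K)))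

section Aux

variable {K : ℕ} (hK : 2 ≤ K) (cap : Sym2 (Fin K) → ℝ)
  (hcap : ∀ u, 0 ≤ cap u) (A : Finset (Fin K))

private lemma mem_E_iff (i j : Fin K) :
    (i, j) ∈ (pathNetwork K hK cap hcap A).E ↔
      (i.val + 1 = j.val ∨ j.val + 1 = i.val) := by
  simp [pathNetwork]

include hcap in
private lemma cmin_nonneg : 0 ≤ cmin K hK cap :=
  Finset.le_inf' _ _ fun _ _ => hcap _

private lemma cmin_le (a : ℕ) (h : a + 1 < K) :
    cmin K hK cap ≤ cap (Sym2.mk (⟨a, by omega⟩ : Fin K) (⟨a + 1, h⟩ : Fin K)) :=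
  Finset.inf'_le _ (Finset.mem_univ (⟨a, by omega⟩ : Fin (K - 1)))

private lemma cmin_exists :
    ∃ a : Fin (K - 1), cmin K hK cap
      = cap (Sym2.mk (⟨a.val, by have := a.isLt; omega⟩ : Fin K)
          (⟨a.val + 1, by have := a.isLt; omega⟩ : Fin K)) := by
  obtain ⟨a, -, h⟩ := Finset.exists_mem_eq_inf'
    (Finset.univ_nonempty_iff.mpr ⟨⟨0, by omega⟩⟩)
    (fun j : Fin (K - 1) => cap (Sym2.mk (⟨j.val, by have := j.isLt; omega⟩ : Fin K)
      (⟨j.val + 1, by have := j.isLt; omega⟩ : Fin K)))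
  exact ⟨a, h⟩

private lemma flowOf_eq (f : Fin K × Fin K → ℝ) :
    (pathNetwork K hK cap hcap A).flowOf f = f (⟨0, by omega⟩, ⟨1, by omega⟩) := by
  unfold ISACNetwork.flowOf
  have hfil : (Finset.univ.filter fun j =>
      ((pathNetwork K hK cap hcap A).Tx, j) ∈ (pathNetwork K hK cap hcap A).E)
      = {(⟨1, by omega⟩ : Fin K)} := by
    ext j
    simp [pathNetwork, Fin.ext_iff]
    omega
  rw [hfil, Finset.sum_singleton]
  rfl

private lemma cut {f s : Fin K × Fin K → ℝ}
    (hv : (pathNetwork K hK cap hcap A).Valid f s) (a : ℕ) :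
    ∀ h : a + 1 < K,
      f (⟨a, by omega⟩, ⟨a + 1, h⟩) - f (⟨a + 1, h⟩, ⟨a, by omega⟩)
        = (pathNetwork K hK cap hcap A).flowOf f := by
  obtain ⟨hf0, hs0, ca, hca0, hsplit, hle, hTx, hRx, hcons⟩ := hv
  induction a with
  | zero =>
    intro h
    rw [flowOf_eq hK cap hcap A f]
    have h10 : f (⟨1, h⟩, ⟨0, by omega⟩) = 0 := by
      have := hTx ⟨1, h⟩ (by simp [pathNetwork])
      exact this
    rw [h10]
    ring
  | succ n ih =>
    intro h
    have ih' := ih (by omega)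
    have hcons' := hcons ⟨n + 1, by omega⟩
      (by simp [pathNetwork, Fin.ext_iff])
      (by simp [pathNetwork, Fin.ext_iff]; omega)
    have hin : (Finset.univ.filter fun i =>
        (i, (⟨n + 1, by omega⟩ : Fin K)) ∈ (pathNetwork K hK cap hcap A).E)
        = {(⟨n, by omega⟩ : Fin K), ⟨n + 2, h⟩} := by
      ext i; simp [pathNetwork, Fin.ext_iff]; omega
    have hout : (Finset.univ.filter fun k =>
        ((⟨n + 1, by omega⟩ : Fin K), k) ∈ (pathNetwork K hK cap hcap A).E)
        = {(⟨n, by omega⟩ : Fin K), ⟨n + 2, h⟩} := by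
      ext i; simp [pathNetwork, Fin.ext_iff]; omega
    rw [hin, hout, Finset.sum_pair (by simp [Fin.ext_iff]),
      Finset.sum_pair (by simp [Fin.ext_iff])] at hcons'
    linarith

private lemma flow_le_cmin {f s : Fin K × Fin K → ℝ}
    (hv : (pathNetwork K hK cap hcap A).Valid f s) :
    (pathNetwork K hK cap hcap A).flowOf f ≤ cmin K hK cap := by
  obtain ⟨a, hmin⟩ := cmin_exists hK cap
  have ha : a.val + 1 < K := by have := a.isLt; omega
  have hcut := cut hK cap hcap A hv a.val ha
  obtain ⟨hf0, hs0, ca, hca0, hsplit, hle, hTx, hRx, hcons⟩ := hv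
  have hm1 : ((⟨a.val, by omega⟩ : Fin K), (⟨a.val + 1, ha⟩ : Fin K))
      ∈ (pathNetwork K hK cap hcap A).E := by
    rw [mem_E_iff]; left; rfl
  have hm2 : ((⟨a.val + 1, ha⟩ : Fin K), (⟨a.val, by omega⟩ : Fin K))
      ∈ (pathNetwork K hK cap hcap A).E := by
    rw [mem_E_iff]; right; rfl
  have h1 := hsplit _ _ hm1
  have hcN : (pathNetwork K hK cap hcap A).c = cap := rfl
  rw [hcN] at h1
  have h2 := hle _ hm1
  have h3 := hle _ hm2
  have h4 := hf0 _ hm2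
  have h5 := hs0 _ hm1
  have h6 := hs0 _ hm2
  rw [hmin]
  linarith

private lemma construct_valid (a b : Fin K) (hab : a.val + 1 = b.val)
    (ε : ℝ) (hε : 0 ≤ ε) (hcab : cmin K hK cap + ε ≤ cap (Sym2.mk a b)) :
    (pathNetwork K hK cap hcap A).Valid
      (fun e => if e.1.val + 1 = e.2.val then cmin K hK cap else 0)
      (fun e => if e = (a, b) then ε else 0) := by
  refine ⟨fun e _ => ?_, fun e _ => ?_,
    fun e => if e.1.val + 1 = e.2.val then cap (Sym2.mk e.1 e.2) else 0,
    fun e _ => ?_, ?_, ?_, ?_, ?_, ?_⟩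
  · dsimp only; split_ifs
    · exact cmin_nonneg hK cap hcap
    · exact le_rfl
  · dsimp only; split_ifs
    · exact hε
    · exact le_rfl
  · dsimp only; split_ifs
    · exact hcap _
    · exact le_rfl
  · intro i j hij
    rw [mem_E_iff] at hij
    dsimp only
    rcases hij with h1 | h1
    · rw [if_pos h1, if_neg (by omega), add_zero]; rfl
    · rw [if_neg (by omega), if_pos h1, zero_add, Sym2.eq_swap]; rfl
  · intro e he
    by_cases heq : e = (a, b)
    · subst heq
      simpa [hab] using hcab
    · dsimp only
      rw [if_neg heq]
      by_cases hfwd : e.1.val + 1 = e.2.val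
      · rw [if_pos hfwd, if_pos hfwd, add_zero]
        obtain ⟨x, y⟩ := e
        have hlt : x.val + 1 < K := by
          have := y.isLt; simp only at hfwd; omega
        have hy : y = ⟨x.val + 1, hlt⟩ := Fin.ext (by simpa using hfwd.symm)
        subst hy
        exact cmin_le hK cap x.val hlt
      · simp [hfwd]
  · intro i hi
    dsimp only
    rw [if_neg]
    intro hcon
    have : ((pathNetwork K hK cap hcap A).Tx).val = 0 := rfl
    omega
  · intro j hj
    dsimp only
    rw [if_neg]
    intro hcon
    have h1 : ((pathNetwork K hK cap hcap A).Rx).val = K - 1 := rfl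
    have := j.isLt
    omega
  · intro j hjT hjR
    have hj0 : j.val ≠ 0 := by
      intro hc
      exact hjT (Fin.ext (by simp [hc, pathNetwork]))
    have hjK : j.val ≠ K - 1 := by
      intro hc
      exact hjR (Fin.ext (by simp [hc, pathNetwork]))
    have hjlt : j.val + 1 < K := by have := j.isLt; omega
    have hin : (Finset.univ.filter fun i =>
        (i, j) ∈ (pathNetwork K hK cap hcap A).E)
        = {(⟨j.val - 1, by omega⟩ : Fin K), ⟨j.val + 1, hjlt⟩} := by
      ext i; simp [pathNetwork, Fin.ext_iff]; omega
    have hout : (Finset.univ.filter fun k =>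
        (j, k) ∈ (pathNetwork K hK cap hcap A).E)
        = {(⟨j.val - 1, by omega⟩ : Fin K), ⟨j.val + 1, hjlt⟩} := by
      ext i; simp [pathNetwork, Fin.ext_iff]; omega
    have hne : ((⟨j.val - 1, by omega⟩ : Fin K)) ≠ ⟨j.val + 1, hjlt⟩ := by
      simp only [ne_eq, Fin.mk.injEq]
      omega
    rw [hin, hout, Finset.sum_pair hne, Finset.sum_pair hne]
    dsimp only
    rw [if_pos (show j.val - 1 + 1 = j.val by omega),
      if_neg (show ¬(j.val + 1 + 1 = j.val) by omega),
      if_neg (show ¬(j.val + 1 = j.val - 1) by omega),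
      if_pos (show j.val + 1 = j.val + 1 from rfl)]
    ring

private lemma flowOf_construct :
    (pathNetwork K hK cap hcap A).flowOf
      (fun e => if e.1.val + 1 = e.2.val then cmin K hK cap else 0)
      = cmin K hK cap := by
  rw [flowOf_eq]
  simp

private lemma sensOf_construct (a b : Fin K)
    (hmem : (a, b) ∈ (pathNetwork K hK cap hcap A).EA) (ε : ℝ) :
    (pathNetwork K hK cap hcap A).sensOf (fun e => if e = (a, b) then ε else 0) = ε := by
  unfold ISACNetwork.sensOf
  rw [Finset.sum_ite_eq' _ (a, b) fun _ => ε, if_pos hmem]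

end Aux

/-- In a one-dimensional ISAC network with nonempty sensing link set `U(A)`,
free sensing occurs (there is `s > 0` with `(s, f*) ∈ R`) if and only if some
sensing link has capacity strictly above the bottleneck `c_min`. -/
theorem oneD_free_sensing {K : ℕ} (hK : 2 ≤ K) (cap : Sym2 (Fin K) → ℝ)
    (hcap : ∀ u, 0 ≤ cap u) (A : Finset (Fin K))
    (hUA : (pathNetwork K hK cap hcap A).UA.Nonempty)
    (fstar : ℝ)
    (hfstar : IsGreatest
      {f : ℝ | ∃ s : ℝ, (s, f) ∈ (pathNetwork K hK cap hcap A).Region} fstar) :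
    (∃ s : ℝ, 0 < s ∧ (s, fstar) ∈ (pathNetwork K hK cap hcap A).Region) ↔
      ∃ u ∈ (pathNetwork K hK cap hcap A).UA, cmin K hK cap < cap u := by
  set N := pathNetwork K hK cap hcap A with hN
  -- fstar = cmin
  have hach : ∃ s : ℝ, (s, cmin K hK cap) ∈ N.Region := by
    have hv := construct_valid hK cap hcap A ⟨0, by omega⟩ ⟨1, by omega⟩ rfl 0 le_rfl
      (by rw [add_zero]; exact cmin_le hK cap 0 (by omega))
    exact ⟨_, _, _, hv, rfl, flowOf_construct hK cap hcap A⟩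
  have hub : ∀ x ∈ {f : ℝ | ∃ s : ℝ, (s, f) ∈ N.Region}, x ≤ cmin K hK cap := by
    rintro x ⟨s0, fr, sr, hv, -, hfl⟩
    have hfl' : N.flowOf fr = x := hfl
    rw [← hfl']
    exact flow_le_cmin hK cap hcap A hv
  have hfc : fstar = cmin K hK cap :=
    le_antisymm (hub _ hfstar.1) (hfstar.2 hach)
  constructor
  · rintro ⟨s0, hs0, fr, sr, hv, hsens, hfl⟩
    have hex : ∃ e ∈ N.EA, 0 < sr e := by
      by_contra hcon
      push_neg at hcon
      have hnp : N.sensOf sr ≤ 0 := Finset.sum_nonpos hcon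
      rw [hsens] at hnp
      simp only at hnp
      linarith
    obtain ⟨⟨x, y⟩, heA, hxpos⟩ := hex
    refine ⟨Sym2.mk x y, Finset.mem_image_of_mem _ heA, ?_⟩
    have hxyE : (x, y) ∈ N.E := (Finset.mem_filter.mp heA).1
    have hyxE : (y, x) ∈ N.E := N.symm _ _ hxyE
    rw [hN, mem_E_iff] at hxyE
    have hcv := hv
    obtain ⟨hf0, hs0', ca, hca0, hsplit, hle', hTx, hRx, hcons⟩ := hcv
    have hfl' : N.flowOf fr = fstar := hfl
    have hflc : N.flowOf fr = cmin K hK cap := by rw [hfl', hfc]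
    rcases hxyE with hfw | hbw
    · have hlt : x.val + 1 < K := by have := y.isLt; omega
      have hy : y = ⟨x.val + 1, hlt⟩ := Fin.ext hfw.symm
      subst hy
      have hcut := cut hK cap hcap A hv x.val hlt
      rw [hflc] at hcut
      have hm1 : ((⟨x.val, by omega⟩ : Fin K), (⟨x.val + 1, hlt⟩ : Fin K)) ∈ N.E := by
        rw [hN, mem_E_iff]; left; rfl
      have hm2 : ((⟨x.val + 1, hlt⟩ : Fin K), (⟨x.val, by omega⟩ : Fin K)) ∈ N.E := by
        rw [hN, mem_E_iff]; right; rfl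
      have h1 := hsplit _ _ hm1
      have hcN : N.c = cap := rfl
      rw [hcN] at h1
      have h2 := hle' _ hm1
      have h3 := hle' _ hm2
      have h4 := hf0 _ hm2
      have h5 := hs0' _ hm1
      have h6 := hs0' _ hm2
      linarith
    · have hlt : y.val + 1 < K := by have := x.isLt; omega
      have hx : x = ⟨y.val + 1, hlt⟩ := Fin.ext hbw.symm
      subst hx
      have hcut := cut hK cap hcap A hv y.val hlt
      rw [hflc] at hcut
      have hm1 : ((⟨y.val, by omega⟩ : Fin K), (⟨y.val + 1, hlt⟩ : Fin K)) ∈ N.E := by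
        rw [hN, mem_E_iff]; left; rfl
      have hm2 : ((⟨y.val + 1, hlt⟩ : Fin K), (⟨y.val, by omega⟩ : Fin K)) ∈ N.E := by
        rw [hN, mem_E_iff]; right; rfl
      have h1 := hsplit _ _ hm1
      have hcN : N.c = cap := rfl
      rw [hcN] at h1
      have h2 := hle' _ hm1
      have h3 := hle' _ hm2
      have h4 := hf0 _ hm2
      have h5 := hs0' _ hm1
      have h6 := hs0' _ hm2
      rw [Sym2.eq_swap]
      linarith
  · rintro ⟨u, hu, hcu⟩
    obtain ⟨e, heA, rfl⟩ := Finset.mem_image.mp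
      (show u ∈ N.EA.image (fun e => Sym2.mk e.1 e.2) from hu)
    obtain ⟨x, y⟩ := e
    have hcu : cmin K hK cap < cap (Sym2.mk x y) := hcu
    have hmem := Finset.mem_filter.mp heA
    have hE := hmem.1
    rw [hN, mem_E_iff] at hE
    obtain ⟨a, b, hab, habA, habu⟩ :
        ∃ a b : Fin K, a.val + 1 = b.val ∧ (a, b) ∈ N.EA
          ∧ Sym2.mk a b = Sym2.mk x y := by
      rcases hE with h | h
      · exact ⟨x, y, h, heA, rfl⟩
      · refine ⟨y, x, h, ?_, Sym2.eq_swap⟩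
        exact Finset.mem_filter.mpr ⟨N.symm _ _ hmem.1, hmem.2.2, hmem.2.1⟩
    set ε := cap (Sym2.mk x y) - cmin K hK cap with hε
    have hεpos : 0 < ε := by rw [hε]; linarith
    have hv := construct_valid hK cap hcap A a b hab ε (le_of_lt hεpos)
      (by rw [habu]; linarith)
    refine ⟨ε, hεpos, _, _, hv, ?_, ?_⟩
    · exact sensOf_construct hK cap hcap A a b habA ε
    · show N.flowOf _ = fstar
      rw [hfc]
      exact flowOf_construct hK cap hcap A
end

section
/- For every ISAC network, the maximum free-communication throughput f̃ := max{f : (s*, f) ∈ R}, where s* = Σ_{u ∈ U(A)} c_u is the maximum sensing fidelity, satisfies f̃ > 0 if and only if there exists a directed path from T_x to R_x in (V, E) that uses no link of E(A) and all of whose links lie on undirected links of strictly positive capacity. -/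
namespace ISACNetwork
variable {V : Type} [Fintype V] [DecidableEq V]

lemma sum_UA_eq (N : ISACNetwork V) (ca : V × V → ℝ)
    (hca : ∀ i j : V, (i, j) ∈ N.E → ca (i, j) + ca (j, i) = N.c (Sym2.mk i j)) :
    ∑ u ∈ N.UA, N.c u = ∑ e ∈ N.EA, ca e := by
  refine Finset.sum_image' ca ?_
  rintro ⟨i, j⟩ hij
  have hE : (i, j) ∈ N.E ∧ i ∈ N.A ∧ j ∈ N.A := by
    simpa [ISACNetwork.EA] using hij
  have hne : i ≠ j := by rintro rfl; exact N.irrefl i hE.1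
  have hji : (j, i) ∈ N.EA := by
    simp [ISACNetwork.EA, N.symm i j hE.1, hE.2.1, hE.2.2]
  have hfil : (N.EA.filter fun e => Sym2.mk e.1 e.2 = Sym2.mk i j) = {(i, j), (j, i)} := by
    ext ⟨a, b⟩
    simp only [Finset.mem_filter, Finset.mem_insert, Finset.mem_singleton]
    constructor
    · rintro ⟨-, h⟩
      rcases Sym2.eq_iff.1 h with ⟨rfl, rfl⟩ | ⟨rfl, rfl⟩
      · left; rfl
      · right; rfl
    · rintro (h | h) <;> rw [Prod.ext_iff] at h <;> obtain ⟨rfl, rfl⟩ := h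
      · exact ⟨hij, rfl⟩
      · exact ⟨hji, Sym2.eq_swap⟩
  rw [hfil, Finset.sum_insert (by simp [Prod.ext_iff, hne]), Finset.sum_singleton]
  exact (hca i j hE.1).symm


lemma flow_of_inj_path (N : ISACNetwork V) (n : ℕ) (p : Fin (n + 1) → V)
    (hinj : Function.Injective p) (h0 : p 0 = N.Tx) (hl : p (Fin.last n) = N.Rx)
    (he : ∀ i : Fin n, (p i.castSucc, p i.succ) ∈ N.E ∧
        (p i.castSucc, p i.succ) ∉ N.EA ∧ 0 < N.c (Sym2.mk (p i.castSucc) (p i.succ))) :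
    ∃ fl : ℝ, 0 < fl ∧ (∑ u ∈ N.UA, N.c u, fl) ∈ N.Region := by
  classical
  have hn : 0 < n := by
    rcases Nat.eq_zero_or_pos n with h | h
    · subst h
      exact absurd ((h0.symm.trans (congrArg p (Fin.ext rfl))).trans hl) N.TxNeRx
    · exact h
  set edge : Fin n → V × V := fun i => (p i.castSucc, p i.succ) with hedge
  have t0 : Fin n := ⟨0, hn⟩
  have : Nonempty (Fin n) := ⟨⟨0, hn⟩⟩
  set ε : ℝ := Finset.univ.inf' Finset.univ_nonempty (fun i => N.c (Sym2.mk (edge i).1 (edge i).2) / 2)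
    with hεdef
  have hε : 0 < ε := (Finset.lt_inf'_iff _).2 fun i _ => by have := (he i).2.2; linarith
  set f : V × V → ℝ := fun e => if ∃ i : Fin n, edge i = e then ε else 0 with hf
  have hfval : ∀ i : Fin n, f (edge i) = ε := fun i => if_pos ⟨i, rfl⟩
  have hf0 : ∀ e, (∀ i : Fin n, edge i ≠ e) → f e = 0 := by
    intro e h; rw [hf]; exact if_neg (by push_neg; exact h)
  have hfnn : ∀ e, 0 ≤ f e := by
    intro e; rw [hf]; dsimp only
    split_ifs
    · exact le_of_lt hε
    · exact le_refl 0
  set ca : V × V → ℝ := fun e => N.c (Sym2.mk e.1 e.2) / 2 with hca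
  set s : V × V → ℝ := fun e => if e ∈ N.EA then ca e else 0 with hs
  -- flow never enters Tx
  have hinTx : ∀ i : V, f (i, N.Tx) = 0 := by
    intro i
    apply hf0
    intro t ht
    have : p t.succ = N.Tx := congrArg Prod.snd ht
    rw [← h0] at this
    have : t.succ = 0 := hinj this
    exact Fin.succ_ne_zero t this
  have houtRx : ∀ j : V, f (N.Rx, j) = 0 := by
    intro j
    apply hf0
    intro t ht
    have : p t.castSucc = N.Rx := congrArg Prod.fst ht
    rw [← hl] at this
    have h2 : t.castSucc = Fin.last n := hinj this
    have := congrArg Fin.val h2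
    simp only [Fin.coe_castSucc, Fin.val_last] at this
    exact absurd this (Nat.ne_of_lt t.isLt)
  -- flow conservation
  have hcons : ∀ j : V, j ≠ N.Tx → j ≠ N.Rx →
      ∑ i ∈ Finset.univ.filter (fun i => (i, j) ∈ N.E), f (i, j)
        = ∑ k ∈ Finset.univ.filter (fun k => (j, k) ∈ N.E), f (j, k) := by
    intro j hjT hjR
    by_cases hon : ∃ m : Fin (n + 1), p m = j
    · obtain ⟨m, hm⟩ := hon
      have hm0 : m.val ≠ 0 := by
        intro h
        exact hjT (by rw [← hm, ← h0]; exact congrArg p (Fin.ext h))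
      have hmn : m.val ≠ n := by
        intro h
        exact hjR (by rw [← hm, ← hl]; exact congrArg p (Fin.ext h))
      have hmlt : m.val < n + 1 := m.isLt
      set tin : Fin n := ⟨m.val - 1, by omega⟩ with htin
      set tout : Fin n := ⟨m.val, by omega⟩ with htout
      have hein : edge tin = (p tin.castSucc, j) := by
        have h1 : p tin.succ = p m := congrArg p (Fin.ext (by show m.val - 1 + 1 = m.val; omega))
        show (p tin.castSucc, p tin.succ) = (p tin.castSucc, j)
        rw [h1, hm]
      have heout : edge tout = (j, p tout.succ) := by
        have h1 : p tout.castSucc = p m := congrArg p (Fin.ext rfl)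
        show (p tout.castSucc, p tout.succ) = (j, p tout.succ)
        rw [h1, hm]
      have hleft : ∑ i ∈ Finset.univ.filter (fun i => (i, j) ∈ N.E), f (i, j) = ε := by
        rw [Finset.sum_eq_single_of_mem (p tin.castSucc)]
        · rw [← hein, hfval]
        · simp only [Finset.mem_filter, Finset.mem_univ, true_and]
          rw [← hein]; exact (he tin).1
        · intro b _ hb
          apply hf0
          intro t ht
          have h2 : p t.succ = j := congrArg Prod.snd ht
          rw [← hm] at h2
          have h3 : t.succ = m := hinj h2
          have h4v : t.val = m.val - 1 := by
            have := congrArg Fin.val h3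
            simp only [Fin.val_succ] at this
            omega
          have h4 : t = tin := Fin.ext (by rw [htin]; exact h4v)
          have h5 : b = p t.castSucc := (congrArg Prod.fst ht).symm
          rw [h4] at h5
          exact hb h5
      have hright : ∑ k ∈ Finset.univ.filter (fun k => (j, k) ∈ N.E), f (j, k) = ε := by
        rw [Finset.sum_eq_single_of_mem (p tout.succ)]
        · rw [← heout, hfval]
        · simp only [Finset.mem_filter, Finset.mem_univ, true_and]
          rw [← heout]; exact (he tout).1
        · intro b _ hb
          apply hf0
          intro t ht
          have h2 : p t.castSucc = j := congrArg Prod.fst ht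
          rw [← hm] at h2
          have h3 : t.castSucc = m := hinj h2
          have h4v : t.val = m.val := by
            have := congrArg Fin.val h3
            simp only [Fin.coe_castSucc] at this
            omega
          have h4 : t = tout := Fin.ext (by rw [htout]; exact h4v)
          have h5 : b = p t.succ := (congrArg Prod.snd ht).symm
          rw [h4] at h5
          exact hb h5
      rw [hleft, hright]
    · push_neg at hon
      rw [Finset.sum_eq_zero, Finset.sum_eq_zero]
      · intro k _
        exact hf0 _ (fun t ht => hon t.castSucc (congrArg Prod.fst ht))
      · intro i _
        exact hf0 _ (fun t ht => hon t.succ (congrArg Prod.snd ht))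
  -- throughput
  have hflow : N.flowOf f = ε := by
    set t0 : Fin n := ⟨0, hn⟩ with ht0
    have he0 : edge t0 = (N.Tx, p t0.succ) := by
      have h1 : p t0.castSucc = p 0 := congrArg p (Fin.ext rfl)
      show (p t0.castSucc, p t0.succ) = (N.Tx, p t0.succ)
      rw [h1, h0]
    rw [flowOf]
    rw [Finset.sum_eq_single_of_mem (p t0.succ)]
    · rw [← he0, hfval]
    · simp only [Finset.mem_filter, Finset.mem_univ, true_and]
      rw [← he0]; exact (he t0).1
    · intro b _ hb
      apply hf0
      intro t ht
      have h2 : p t.castSucc = N.Tx := congrArg Prod.fst ht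
      rw [← h0] at h2
      have h3 : t.castSucc = 0 := hinj h2
      have h4v : t.val = 0 := by
        have := congrArg Fin.val h3
        simpa only [Fin.coe_castSucc, Fin.val_zero] using this
      have h4 : t = t0 := Fin.ext (by rw [ht0]; exact h4v)
      have h5 : b = p t.succ := (congrArg Prod.snd ht).symm
      rw [h4] at h5
      exact hb h5
  -- the capacity constraint
  have hcap : ∀ e ∈ N.E, f e + s e ≤ ca e := by
    intro e heE
    by_cases hEA : e ∈ N.EA
    · have hfe : f e = 0 := by
        apply hf0
        intro t ht
        have h6 : edge t ∈ N.EA := by rw [ht]; exact hEA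
        exact (he t).2.1 h6
      have hse : s e = ca e := if_pos hEA
      rw [hse, hfe, zero_add]
    · have hse : s e = 0 := if_neg hEA
      rw [hse, add_zero]
      by_cases hex : ∃ t : Fin n, edge t = e
      · obtain ⟨t, rfl⟩ := hex
        rw [hfval]
        exact Finset.inf'_le _ (Finset.mem_univ t)
      · push_neg at hex
        rw [hf0 _ hex]
        show (0 : ℝ) ≤ N.c (Sym2.mk e.1 e.2) / 2
        have := N.c_nonneg (Sym2.mk e.1 e.2)
        linarith
  -- sensing
  have hsens : N.sensOf s = ∑ u ∈ N.UA, N.c u := by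
    rw [sensOf]
    have h1 : ∑ e ∈ N.EA, s e = ∑ e ∈ N.EA, ca e :=
      Finset.sum_congr rfl fun e heA => if_pos heA
    rw [h1, ← N.sum_UA_eq ca]
    intro i j hij
    show N.c (Sym2.mk i j) / 2 + N.c (Sym2.mk j i) / 2 = N.c (Sym2.mk i j)
    have hsw : Sym2.mk j i = Sym2.mk i j := Sym2.eq_swap
    rw [hsw]
    ring
  refine ⟨ε, hε, f, s, ⟨fun e _ => hfnn e, fun e _ => ?_, ca, fun e heE => ?_, fun i j hij => ?_,
    hcap, fun i _ => hinTx i, fun j _ => houtRx j, hcons⟩, hsens, hflow⟩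
  · by_cases h : e ∈ N.EA
    · have hse : s e = ca e := if_pos h
      rw [hse]
      show (0 : ℝ) ≤ N.c (Sym2.mk e.1 e.2) / 2
      have := N.c_nonneg (Sym2.mk e.1 e.2); linarith
    · have hse : s e = 0 := if_neg h
      rw [hse]
  · show (0 : ℝ) ≤ N.c (Sym2.mk e.1 e.2) / 2
    have := N.c_nonneg (Sym2.mk e.1 e.2); linarith
  · show N.c (Sym2.mk i j) / 2 + N.c (Sym2.mk j i) / 2 = N.c (Sym2.mk i j)
    have hsw : Sym2.mk j i = Sym2.mk i j := Sym2.eq_swap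
    rw [hsw]; ring


lemma path_of_flow (N : ISACNetwork V) (fr sr : V × V → ℝ) (hv : N.Valid fr sr)
    (hsens : N.sensOf sr = ∑ u ∈ N.UA, N.c u) (hpos : 0 < N.flowOf fr) :
    ∃ (n : ℕ) (p : Fin (n + 1) → V),
      p 0 = N.Tx ∧ p (Fin.last n) = N.Rx ∧
      ∀ i : Fin n, (p i.castSucc, p i.succ) ∈ N.E ∧
        (p i.castSucc, p i.succ) ∉ N.EA ∧
        0 < N.c (Sym2.mk (p i.castSucc) (p i.succ)) := by
  classical
  obtain ⟨hfnn, hsnn, ca, hcann, hsplit, hcap, hinTx, houtRx, hcons⟩ := hv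
  have hEAsub : N.EA ⊆ N.E := Finset.filter_subset _ _
  -- no flow on sensing links
  have hfr0EA : ∀ e ∈ N.EA, fr e = 0 := by
    have hsum : ∑ e ∈ N.EA, sr e = ∑ e ∈ N.EA, ca e := by
      have := N.sum_UA_eq ca hsplit
      rw [← this]
      exact hsens ▸ rfl
    have h2 : ∑ e ∈ N.EA, fr e ≤ 0 := by
      have h3 : ∑ e ∈ N.EA, (fr e + sr e) ≤ ∑ e ∈ N.EA, ca e :=
        Finset.sum_le_sum fun e he' => hcap e (hEAsub he')
      rw [Finset.sum_add_distrib, hsum] at h3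
      linarith
    have h4 : ∑ e ∈ N.EA, fr e = 0 :=
      le_antisymm h2 (Finset.sum_nonneg fun e he' => hfnn e (hEAsub he'))
    intro e he'
    exact (Finset.sum_eq_zero_iff_of_nonneg fun e' he'' => hfnn e' (hEAsub he'')).1 h4 e he'
  -- flow bounded by capacity
  have hfrlec : ∀ i j : V, (i, j) ∈ N.E → fr (i, j) ≤ N.c (Sym2.mk i j) := by
    intro i j hij
    have h1 := hcap (i, j) hij
    have h2 := hsnn (i, j) hij
    have h3 := hcann (j, i) (N.symm i j hij)
    have h4 := hsplit i j hij
    linarith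
  -- reachability predicate
  set Reach : V → Prop := fun v => ∃ (n : ℕ) (p : Fin (n + 1) → V),
      p 0 = N.Tx ∧ p (Fin.last n) = v ∧
      ∀ i : Fin n, (p i.castSucc, p i.succ) ∈ N.E ∧ 0 < fr (p i.castSucc, p i.succ)
    with hReach
  have hReachTx : Reach N.Tx := ⟨0, fun _ => N.Tx, rfl, rfl, fun i => i.elim0⟩
  have hstep : ∀ j k : V, Reach j → (j, k) ∈ N.E → 0 < fr (j, k) → Reach k := by
    rintro j k ⟨n, p, h0, hl, he⟩ hjk hfjk
    set q : Fin (n + 1 + 1) → V := fun t =>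
      if h : t.val ≤ n then p ⟨t.val, by omega⟩ else k with hq
    have hqlo : ∀ (t : Fin (n + 2)) (ht : t.val ≤ n) (h2 : t.val < n + 1),
        q t = p ⟨t.val, h2⟩ := fun t ht h2 => dif_pos ht
    have hqhi : ∀ (t : Fin (n + 2)), ¬ t.val ≤ n → q t = k := fun t ht => dif_neg ht
    refine ⟨n + 1, q, ?_, ?_, ?_⟩
    · rw [hqlo 0 (by simp) (by simp), ← h0]
      exact congrArg p (Fin.ext rfl)
    · exact hqhi (Fin.last (n + 1)) (by simp)
    · intro i
      have hi : i.val < n + 1 := i.isLt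
      have hcsv : (Fin.castSucc i).val = i.val := rfl
      have hsv : (Fin.succ i).val = i.val + 1 := rfl
      by_cases hA : i.val < n
      · have e1 : q i.castSucc = p ⟨i.val, by omega⟩ :=
          (hqlo i.castSucc (by rw [hcsv]; omega) (by rw [hcsv]; omega)).trans
            (congrArg p (Fin.ext hcsv))
        have e2 : q i.succ = p ⟨i.val + 1, by omega⟩ :=
          (hqlo i.succ (by rw [hsv]; omega) (by rw [hsv]; omega)).trans
            (congrArg p (Fin.ext hsv))
        have hP := he ⟨i.val, hA⟩
        have ex : p ⟨i.val, by omega⟩ = p (Fin.castSucc ⟨i.val, hA⟩) :=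
          congrArg p (Fin.ext rfl)
        have ey : p ⟨i.val + 1, by omega⟩ = p (Fin.succ ⟨i.val, hA⟩) :=
          congrArg p (Fin.ext rfl)
        rw [e1, e2, ex, ey]
        exact hP
      · have hieq : i.val = n := by omega
        have e1 : q i.castSucc = p ⟨i.val, by omega⟩ :=
          (hqlo i.castSucc (by rw [hcsv]; omega) (by rw [hcsv]; omega)).trans
            (congrArg p (Fin.ext hcsv))
        have e2 : q i.succ = k := hqhi i.succ (by rw [hsv]; omega)
        have ej : p ⟨i.val, by omega⟩ = j := by
          rw [← hl]; exact congrArg p (Fin.ext (by simp [hieq]))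
        rw [e1, e2, ej]
        exact ⟨hjk, hfjk⟩
  -- Rx is reachable
  have hRx : Reach N.Rx := by
    by_contra hnR
    set S : Finset V := Finset.univ.filter (fun v => Reach v) with hS
    have hmemS : ∀ v, v ∈ S ↔ Reach v := by
      intro v; rw [hS]; simp
    have hTxS : N.Tx ∈ S := (hmemS _).2 hReachTx
    set g : V → V → ℝ := fun x y => if Reach x ∧ Reach y ∧ (x, y) ∈ N.E then fr (x, y) else 0
      with hg
    have hgf : ∀ x y, Reach x → (if (x, y) ∈ N.E then fr (x, y) else 0) = g x y := by
      intro x y hx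
      show (if (x, y) ∈ N.E then fr (x, y) else 0)
        = (if Reach x ∧ Reach y ∧ (x, y) ∈ N.E then fr (x, y) else 0)
      by_cases hy : Reach y
      · by_cases hxy : (x, y) ∈ N.E
        · rw [if_pos hxy, if_pos ⟨hx, hy, hxy⟩]
        · rw [if_neg hxy, if_neg (fun h : Reach x ∧ Reach y ∧ (x, y) ∈ N.E => hxy h.2.2)]
      · rw [if_neg (fun h : Reach x ∧ Reach y ∧ (x, y) ∈ N.E => hy h.2.1)]
        by_cases hxy : (x, y) ∈ N.E
        · rw [if_pos hxy]
          by_contra hne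
          have hfrpos : 0 < fr (x, y) :=
            lt_of_le_of_ne (hfnn _ hxy) (by intro h; exact hne h.symm)
          exact hy (hstep x y hx hxy hfrpos)
        · rw [if_neg hxy]
    have hgle : ∀ x y, g x y ≤ (if (x, y) ∈ N.E then fr (x, y) else 0) := by
      intro x y
      show (if Reach x ∧ Reach y ∧ (x, y) ∈ N.E then fr (x, y) else 0)
        ≤ (if (x, y) ∈ N.E then fr (x, y) else 0)
      by_cases h : Reach x ∧ Reach y ∧ (x, y) ∈ N.E
      · rw [if_pos h, if_pos h.2.2]
      · rw [if_neg h]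
        by_cases hxy : (x, y) ∈ N.E
        · rw [if_pos hxy]; exact hfnn _ hxy
        · rw [if_neg hxy]
    have hgzx : ∀ x y, ¬ Reach x → g x y = 0 := by
      intro x y hx
      show (if Reach x ∧ Reach y ∧ (x, y) ∈ N.E then fr (x, y) else 0) = 0
      exact if_neg (fun h => hx h.1)
    have hgzy : ∀ x y, ¬ Reach y → g x y = 0 := by
      intro x y hy
      show (if Reach x ∧ Reach y ∧ (x, y) ∈ N.E then fr (x, y) else 0) = 0
      exact if_neg (fun h => hy h.2.1)
    have key1 : ∑ j ∈ S,
        ((∑ k ∈ Finset.univ.filter (fun k => (j, k) ∈ N.E), fr (j, k))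
          - (∑ i ∈ Finset.univ.filter (fun i => (i, j) ∈ N.E), fr (i, j))) = N.flowOf fr := by
      rw [Finset.sum_eq_single_of_mem N.Tx hTxS]
      · have hinn : ∑ i ∈ Finset.univ.filter (fun i => (i, N.Tx) ∈ N.E), fr (i, N.Tx) = 0 :=
          Finset.sum_eq_zero fun i hi =>
            hinTx i (by simpa using hi)
        rw [hinn, sub_zero, flowOf]
      · intro j hjS hjT
        have hjReach : Reach j := (hmemS _).1 hjS
        have hjR : j ≠ N.Rx := fun h => hnR (h ▸ hjReach)
        rw [hcons j hjT hjR, sub_self]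
    have key2 : ∑ j ∈ S, ∑ k ∈ Finset.univ.filter (fun k => (j, k) ∈ N.E), fr (j, k)
        ≤ ∑ j ∈ S, ∑ i ∈ Finset.univ.filter (fun i => (i, j) ∈ N.E), fr (i, j) := by
      calc ∑ j ∈ S, ∑ k ∈ Finset.univ.filter (fun k => (j, k) ∈ N.E), fr (j, k)
          = ∑ j ∈ S, ∑ k ∈ Finset.univ, g j k := by
            refine Finset.sum_congr rfl fun j hj => ?_
            rw [Finset.sum_filter]
            exact Finset.sum_congr rfl fun k _ => hgf j k ((hmemS _).1 hj)
        _ = ∑ j ∈ Finset.univ, ∑ k ∈ Finset.univ, g j k := by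
            refine Finset.sum_subset (Finset.subset_univ S) fun j _ hj => ?_
            exact Finset.sum_eq_zero fun k _ => hgzx j k (fun hr => hj ((hmemS _).2 hr))
        _ = ∑ k ∈ Finset.univ, ∑ j ∈ Finset.univ, g j k := Finset.sum_comm
        _ = ∑ k ∈ S, ∑ j ∈ Finset.univ, g j k := by
            refine (Finset.sum_subset (Finset.subset_univ S) fun k _ hk => ?_).symm
            exact Finset.sum_eq_zero fun j _ => hgzy j k (fun hr => hk ((hmemS _).2 hr))
        _ ≤ ∑ j ∈ S, ∑ i ∈ Finset.univ.filter (fun i => (i, j) ∈ N.E), fr (i, j) := by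
            refine Finset.sum_le_sum fun j _ => ?_
            rw [Finset.sum_filter]
            exact Finset.sum_le_sum fun i _ => hgle i j
    rw [Finset.sum_sub_distrib] at key1
    linarith
  obtain ⟨n, p, h0, hl, he⟩ := hRx
  refine ⟨n, p, h0, hl, fun i => ⟨(he i).1, ?_, ?_⟩⟩
  · intro hEA
    exact absurd (hfr0EA _ hEA) (ne_of_gt (he i).2)
  · exact lt_of_lt_of_le (he i).2 (hfrlec _ _ (he i).1)

end ISACNetwork

lemma exists_inj_path {V : Type} (P : V × V → Prop) (a b : V) :
    ∀ n : ℕ, ∀ p : Fin (n + 1) → V, p 0 = a → p (Fin.last n) = b →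
      (∀ i : Fin n, P (p i.castSucc, p i.succ)) →
      ∃ (m : ℕ) (q : Fin (m + 1) → V), Function.Injective q ∧ q 0 = a ∧
        q (Fin.last m) = b ∧ ∀ i : Fin m, P (q i.castSucc, q i.succ) := by
  intro n
  induction n using Nat.strong_induction_on with
  | _ n ih =>
  intro p h0 hl he
  by_cases hinj : Function.Injective p
  · exact ⟨n, p, hinj, h0, hl, he⟩
  rw [Function.not_injective_iff] at hinj
  have key : ∀ x y : Fin (n + 1), p x = p y → x.val < y.val →
      ∃ (m : ℕ) (q : Fin (m + 1) → V), Function.Injective q ∧ q 0 = a ∧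
        q (Fin.last m) = b ∧ ∀ i : Fin m, P (q i.castSucc, q i.succ) := by
    intro x y hpxy hlt
    have hyn : y.val ≤ n := by have := y.isLt; omega
    set d := y.val - x.val with hd
    have hd1 : 1 ≤ d := by omega
    set m := n - d with hm
    have hmn : m < n := by omega
    have hxm : x.val ≤ m := by omega
    set q : Fin (m + 1) → V := fun k =>
      if k.val ≤ x.val then p ⟨k.val, by have := k.isLt; omega⟩
      else p ⟨k.val + d, by have := k.isLt; omega⟩ with hq
    have pc : ∀ (u : Fin (n + 1)) (v : ℕ) (hv : v < n + 1), u.val = v → p u = p ⟨v, hv⟩ :=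
      fun u v hv h => congrArg p (Fin.ext h)
    have hqlo : ∀ (k : Fin (m + 1)) (hk : k.val ≤ x.val) (h2 : k.val < n + 1),
        q k = p ⟨k.val, h2⟩ := by
      intro k hk h2; rw [hq]; simp only [if_pos hk]
    have hqhi : ∀ (k : Fin (m + 1)) (hk : ¬ k.val ≤ x.val) (h2 : k.val + d < n + 1),
        q k = p ⟨k.val + d, h2⟩ := by
      intro k hk h2; rw [hq]; simp only [if_neg hk]
    refine ih m hmn q ?_ ?_ ?_
    · rw [hqlo 0 (by simp) (by omega)]
      rw [← h0]; exact congrArg p (Fin.ext rfl)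
    · by_cases hc : (Fin.last m).val ≤ x.val
      · have hxem : x.val = m := by
          have : (Fin.last m).val = m := rfl
          omega
        have hyl : y = Fin.last n := by
          apply Fin.ext; simp only [Fin.val_last]; omega
        calc q (Fin.last m) = p ⟨m, by omega⟩ := hqlo (Fin.last m) hc (by omega)
          _ = p x := congrArg p (Fin.ext hxem.symm)
          _ = p y := hpxy
          _ = b := by rw [hyl]; exact hl
      · rw [hqhi (Fin.last m) hc (by have : (Fin.last m).val = m := rfl; omega)]
        rw [← hl]
        exact congrArg p (Fin.ext (by simp only [Fin.val_last]; omega))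
    · intro i
      have hi : i.val < m := i.isLt
      have hcsv : (i.castSucc : Fin (m + 1)).val = i.val := rfl
      have hsv : (i.succ : Fin (m + 1)).val = i.val + 1 := rfl
      by_cases hA : i.val + 1 ≤ x.val
      · have e1 : q i.castSucc = p ⟨i.val, by omega⟩ := hqlo _ (by omega) (by omega)
        have e2 : q i.succ = p ⟨i.val + 1, by omega⟩ := hqlo _ (by rw [hsv]; omega) (by omega)
        have hP := he ⟨i.val, by omega⟩
        have ex : p ⟨i.val, by omega⟩ = p (Fin.castSucc ⟨i.val, by omega⟩) :=
          congrArg p (Fin.ext rfl)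
        have ey : p ⟨i.val + 1, by omega⟩ = p (Fin.succ ⟨i.val, by omega⟩) :=
          congrArg p (Fin.ext rfl)
        rw [e1, e2, ex, ey]; exact hP
      · by_cases hB : i.val ≤ x.val
        · have hix : i.val = x.val := by omega
          have hyln : y.val < n := by omega
          have e1 : q i.castSucc = p ⟨i.val, by omega⟩ := hqlo _ (by rw [hcsv]; omega) (by omega)
          have e2 : q i.succ = p ⟨i.val + 1 + d, by omega⟩ := by
            rw [hqhi _ (by rw [hsv]; omega) (by rw [hsv]; omega)]
            exact congrArg p (Fin.ext rfl)
          have := he ⟨y.val, hyln⟩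
          rw [e1, e2]
          have ex : p ⟨i.val, by omega⟩ = p (Fin.castSucc ⟨y.val, hyln⟩) := by
            rw [(pc x i.val (by omega) (by omega)).symm, hpxy]
            exact congrArg p (Fin.ext rfl)
          have ey : p ⟨i.val + 1 + d, by omega⟩ = p (Fin.succ ⟨y.val, hyln⟩) := by
            exact congrArg p (Fin.ext (by simp only [Fin.succ_mk]; omega))
          rw [ex, ey]
          exact this
        · have e1 : q i.castSucc = p ⟨i.val + d, by omega⟩ := hqhi _ (by rw [hcsv]; omega) (by omega)
          have e2 : q i.succ = p ⟨i.val + 1 + d, by omega⟩ := by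
            rw [hqhi _ (by rw [hsv]; omega) (by rw [hsv]; omega)]
            exact congrArg p (Fin.ext rfl)
          have hP := he ⟨i.val + d, by omega⟩
          have ex : p ⟨i.val + d, by omega⟩ = p (Fin.castSucc ⟨i.val + d, by omega⟩) :=
            congrArg p (Fin.ext rfl)
          have ey : p ⟨i.val + 1 + d, by omega⟩ = p (Fin.succ ⟨i.val + d, by omega⟩) :=
            congrArg p (Fin.ext (by simp only [Fin.succ_mk]; omega))
          rw [e1, e2, ex, ey]; exact hP
  obtain ⟨x, y, hpxy, hne⟩ := hinj
  rcases Nat.lt_or_ge x.val y.val with h | h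
  · exact key x y hpxy h
  · have : y.val < x.val := by
      rcases Nat.lt_or_ge y.val x.val with h' | h'
      · exact h'
      · exact absurd (Fin.ext (le_antisymm h' h)) hne
    exact key y x hpxy.symm this

/-- The maximum free-communication throughput `f̃ = max{f : (s*, f) ∈ R}` is
strictly positive if and only if there is a directed path from `Tx` to `Rx`
avoiding all links of `E(A)` and using only links whose underlying undirected
links have strictly positive capacity. -/
theorem free_communication_iff_path {V : Type} [Fintype V] [DecidableEq V]
    (N : ISACNetwork V) (ftil : ℝ)
    (hftil : IsGreatest
      {f : ℝ | (∑ u ∈ N.UA, N.c u, f) ∈ N.Region} ftil) :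
    0 < ftil ↔ ∃ (n : ℕ) (p : Fin (n + 1) → V),
      p 0 = N.Tx ∧ p (Fin.last n) = N.Rx ∧
      ∀ i : Fin n, (p i.castSucc, p i.succ) ∈ N.E ∧
        (p i.castSucc, p i.succ) ∉ N.EA ∧
        0 < N.c (Sym2.mk (p i.castSucc) (p i.succ)) := by
  constructor
  · intro hft
    obtain ⟨fr, sr, hv, hsens, hflow⟩ := hftil.1
    exact N.path_of_flow fr sr hv hsens (by rw [hflow]; exact hft)
  · rintro ⟨n, p, h0, hl, he⟩
    obtain ⟨m, q, hinj, h0', hl', he'⟩ :=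
      exists_inj_path (fun e => e ∈ N.E ∧ e ∉ N.EA ∧ 0 < N.c (Sym2.mk e.1 e.2)) N.Tx N.Rx n p h0 hl
        (fun i => he i)
    obtain ⟨fl, hfl, hmem⟩ := N.flow_of_inj_path m q hinj h0' hl' (fun i => he' i)
    exact lt_of_lt_of_le hfl (hftil.2 hmem)
end

section
/- For every ISAC network, the maximum free-sensing fidelity s̃ := max{s : (s, f*) ∈ R}, where f* is the maximum throughput, satisfies s̃ > 0 if and only if there exists a valid assignment achieving throughput f* in which f_{(i,j)} + f_{(j,i)} < c_{{i,j}} for some undirected link {i,j} ∈ U(A); that is, nonzero free sensing is possible if and only if the maximum throughput can be achieved without exhausting all link capacities in the sensing region. -/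
/-- The maximum free-sensing fidelity `s̃ = max{s : (s, f*) ∈ R}` is strictly
positive if and only if the maximum throughput `f*` can be achieved by a valid
assignment which does not exhaust the capacity of some undirected link in the
sensing region. -/
theorem free_sensing_iff {V : Type} [Fintype V] [DecidableEq V]
    (N : ISACNetwork V) (fstar stil : ℝ)
    (hfstar : IsGreatest {f : ℝ | ∃ s : ℝ, (s, f) ∈ N.Region} fstar)
    (hstil : IsGreatest {s : ℝ | (s, fstar) ∈ N.Region} stil) :
    0 < stil ↔ ∃ fr sr : V × V → ℝ, N.Valid fr sr ∧ N.flowOf fr = fstar ∧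
      ∃ i j : V, (i, j) ∈ N.EA ∧ fr (i, j) + fr (j, i) < N.c (Sym2.mk i j) := by
  constructor
  · intro hpos
    obtain ⟨fr, sr, hv, hsens, hflow⟩ := hstil.1
    obtain ⟨hf0, hs0, ca, hca0, hcasum, hle, hsrc, hsink, hcons⟩ := hv
    -- find a link in EA with positive sensing
    have hsum : (0 : ℝ) < ∑ e ∈ N.EA, sr e := by
      rw [show (∑ e ∈ N.EA, sr e) = N.sensOf sr from rfl, hsens]; exact hpos
    have : ∃ e ∈ N.EA, (0 : ℝ) < sr e := by
      by_contra h
      push_neg at h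
      have : (∑ e ∈ N.EA, sr e) ≤ 0 := Finset.sum_nonpos h
      linarith
    obtain ⟨⟨i, j⟩, heA, hsr⟩ := this
    have hijE : (i, j) ∈ N.E := (Finset.mem_filter.mp heA).1
    have hjiE : (j, i) ∈ N.E := N.symm i j hijE
    refine ⟨fr, sr, ⟨hf0, hs0, ca, hca0, hcasum, hle, hsrc, hsink, hcons⟩, hflow, i, j, heA, ?_⟩
    have h1 := hle (i, j) hijE
    have h2 := hle (j, i) hjiE
    have h3 := hcasum i j hijE
    have h4 := hs0 (j, i) hjiE
    linarith
  · rintro ⟨fr, sr, ⟨hf0, hs0, ca, hca0, hcasum, hle, hsrc, hsink, hcons⟩, hflow, i, j, heA, hslack⟩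
    have hijE : (i, j) ∈ N.E := (Finset.mem_filter.mp heA).1
    have hiA : i ∈ N.A := (Finset.mem_filter.mp heA).2.1
    have hjA : j ∈ N.A := (Finset.mem_filter.mp heA).2.2
    have hjiE : (j, i) ∈ N.E := N.symm i j hijE
    have hjiA : (j, i) ∈ N.EA := Finset.mem_filter.mpr ⟨hjiE, hjA, hiA⟩
    have hne : i ≠ j := by rintro rfl; exact N.irrefl i hijE
    have hpne : ((i, j) : V × V) ≠ (j, i) := by
      intro h; exact hne (congrArg Prod.fst h)
    set a : ℝ := ca (i, j) - fr (i, j) with ha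
    set b : ℝ := ca (j, i) - fr (j, i) with hb
    have ha0 : 0 ≤ a := by have := hle (i, j) hijE; have := hs0 (i, j) hijE; simp [ha]; linarith
    have hb0 : 0 ≤ b := by have := hle (j, i) hjiE; have := hs0 (j, i) hjiE; simp [hb]; linarith
    set s' : V × V → ℝ := fun e =>
      (if e = (i, j) then a else 0) + (if e = (j, i) then b else 0) with hs'
    have hsval : N.Valid fr s' := by
      refine ⟨hf0, ?_, ca, hca0, hcasum, ?_, hsrc, hsink, hcons⟩
      · intro e _
        have : (0:ℝ) ≤ (if e = (i, j) then a else 0) := by split <;> simp [ha0]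
        have : (0:ℝ) ≤ (if e = (j, i) then b else 0) := by split <;> simp [hb0]
        positivity
      · intro e heE
        by_cases h1 : e = (i, j)
        · subst h1; simp [hs', hpne, ha]
        · by_cases h2 : e = (j, i)
          · subst h2; simp [hs', hpne.symm, hb]
          · have := hle e heE; have := hs0 e heE
            simp [hs', h1, h2]; linarith
    have hsens' : N.sensOf s' = a + b := by
      unfold ISACNetwork.sensOf
      rw [hs', Finset.sum_add_distrib]
      rw [Finset.sum_ite_eq' N.EA ((i, j) : V × V) (fun _ => a),
          Finset.sum_ite_eq' N.EA ((j, i) : V × V) (fun _ => b)]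
      simp [heA, hjiA]
    have hmem : N.sensOf s' ∈ {s : ℝ | (s, fstar) ∈ N.Region} :=
      ⟨fr, s', hsval, rfl, hflow⟩
    have hab : 0 < a + b := by
      have h3 := hcasum i j hijE
      simp only [ha, hb]; linarith
    have := hstil.2 hmem
    rw [hsens'] at this
    linarith
end
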